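/- Let α be badly approximable (bounded partial quotients) and suppose lim_{q→∞, q ∈ D(α)} min{ε(q), θ(q)} = 0, where ε(q) = q·min{‖-t - jα‖ : |j| < q} and θ(q) = q·min{‖1/2 - t - jα‖ : |j| < q}. Then t ∈ ℤα (mod 1) or t ∈ ℤα + 1/2 (mod 1). -/

import Mathlib

open Set Filter MeasureTheory

/-- Distance from a real number to the nearest integer. -/
noncomputable def nearInt (y : ℝ) : ℝ := |y - round y|

/-- Iterates of the Gauss map starting from `Int.fract α`. -/
noncomputable def gaussIter (α : ℝ) : ℕ → ℝ
  | 0 => Int.fract α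
  | n + 1 => Int.fract (gaussIter α n)⁻¹

/-- `cfAq α k` is the partial quotient `a_{k+1}` of the continued fraction of `α`. -/
noncomputable def cfAq (α : ℝ) (k : ℕ) : ℕ := (⌊(gaussIter α k)⁻¹⌋).toNat

/-- `cfQ α k` is the denominator `q_k` of the `k`-th convergent of `α`. -/
noncomputable def cfQ (α : ℝ) : ℕ → ℕ
  | 0 => 1
  | 1 => cfAq α 0
  | n + 2 => cfAq α (n + 1) * cfQ α (n + 1) + cfQ α n

/-- `cfP α k` is the numerator `p_k` of the `k`-th convergent of `α`. -/
noncomputable def cfP (α : ℝ) : ℕ → ℤ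
  | 0 => ⌊α⌋
  | 1 => cfAq α 0 * ⌊α⌋ + 1
  | n + 2 => cfAq α (n + 1) * cfP α (n + 1) + cfP α n



lemma nearInt_nonneg (y : ℝ) : 0 ≤ nearInt y := abs_nonneg _

lemma nearInt_le (y : ℝ) (m : ℤ) : nearInt y ≤ |y - m| := by
  rw [nearInt, abs_sub_round_eq_min]
  rcases le_or_gt (m : ℝ) (⌊y⌋ : ℝ) with h | h
  · have h1 : Int.fract y ≤ y - m := by
      have := Int.self_sub_floor y
      linarith [this]
    exact le_trans (min_le_left _ _) (h1.trans (le_abs_self _))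
  · have h' : (⌊y⌋ : ℝ) + 1 ≤ m := by
      have : ⌊y⌋ + 1 ≤ m := Int.lt_iff_add_one_le.1 (by exact_mod_cast h)
      exact_mod_cast this
    have h1 : 1 - Int.fract y ≤ m - y := by
      have := Int.self_sub_floor y
      linarith [this]
    refine le_trans (min_le_right _ _) (h1.trans ?_)
    rw [abs_sub_comm]; exact le_abs_self _

lemma nearInt_le' : ∀ (z : ℝ) (n : ℤ), nearInt (z + n) ≤ nearInt z := by
  intro z n
  have h := nearInt_le (z + n) (round z + n)
  have e : (z + n - ((round z + n : ℤ) : ℝ)) = z - round z := by push_cast; ring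
  rw [e] at h; exact h

lemma nearInt_add_int (y : ℝ) (m : ℤ) : nearInt (y + m) = nearInt y := by
  refine le_antisymm (nearInt_le' y m) ?_
  have := nearInt_le' (y + m) (-m); simpa using this

lemma nearInt_neg (y : ℝ) : nearInt (-y) = nearInt y := by
  have h1 : ∀ z : ℝ, nearInt (-z) ≤ nearInt z := by
    intro z
    have h := nearInt_le (-z) (-round z)
    have e : (-z - ((-round z : ℤ) : ℝ)) = -(z - round z) := by push_cast; ring
    rw [e, abs_neg] at h
    exact h
  exact le_antisymm (h1 y) (by simpa using h1 (-y))

lemma nearInt_add_le (x y : ℝ) : nearInt (x + y) ≤ nearInt x + nearInt y := by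
  have h := nearInt_le (x + y) (round x + round y)
  refine h.trans ?_
  have e : (x + y - ((round x + round y : ℤ) : ℝ)) = (x - round x) + (y - round y) := by
    push_cast; ring
  rw [e]; exact (abs_add_le _ _).trans (by rw [nearInt, nearInt])

lemma nearInt_two_mul (y : ℝ) : nearInt (2 * y) ≤ 2 * nearInt y := by
  have h := nearInt_le (2 * y) (2 * round y)
  have e : (2 * y - ((2 * round y : ℤ) : ℝ)) = 2 * (y - round y) := by push_cast; ring
  rw [e, abs_mul] at h
  simpa [nearInt] using h

lemma nearInt_half : nearInt (1/2 : ℝ) = 1/2 := by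
  have : round ((1:ℝ)/2) = 1 := by
    rw [round_eq]; norm_num
  rw [nearInt, this]; norm_num

lemma nearInt_eq_zero {y : ℝ} (h : nearInt y = 0) : ∃ m : ℤ, y = m :=
  ⟨round y, by rwa [nearInt, abs_eq_zero, sub_eq_zero] at h⟩

noncomputable def betaCF (α : ℝ) (k : ℕ) : ℝ := (cfQ α k : ℝ) * α - (cfP α k : ℝ)

section CF
variable {α : ℝ} (hα : Irrational α) (hα0 : 0 < α) (hα1 : α < 1)
include hα hα0 hα1

lemma gauss_mem : ∀ k, Irrational (gaussIter α k) ∧ 0 < gaussIter α k ∧ gaussIter α k < 1 := by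
  intro k
  induction k with
  | zero =>
    have h : Int.fract α = α := Int.fract_eq_self.2 ⟨hα0.le, hα1⟩
    rw [gaussIter, h]; exact ⟨hα, hα0, hα1⟩
  | succ n ih =>
    obtain ⟨hi, h0, _⟩ := ih
    have hinv : Irrational (gaussIter α n)⁻¹ := hi.inv
    have hfr : Irrational (Int.fract (gaussIter α n)⁻¹) := by
      rw [← Int.self_sub_floor]; exact hinv.sub_intCast _
    refine ⟨by rw [gaussIter]; exact hfr, ?_, by rw [gaussIter]; exact Int.fract_lt_one _⟩
    rw [gaussIter]
    rcases (Int.fract_nonneg (gaussIter α n)⁻¹).lt_or_eq with h | h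
    · exact h
    · exact absurd h.symm (by simpa using hfr.ne_int 0)

lemma cfAq_cast (k : ℕ) : ((cfAq α k : ℤ) : ℝ) = (⌊(gaussIter α k)⁻¹⌋ : ℝ) := by
  obtain ⟨_, h0, h1⟩ := gauss_mem hα hα0 hα1 k
  have hgt : (1:ℝ) < (gaussIter α k)⁻¹ := (one_lt_inv_iff₀).2 ⟨h0, h1⟩
  have hfl : 1 ≤ ⌊(gaussIter α k)⁻¹⌋ := by
    rw [Int.le_floor]; exact_mod_cast hgt.le
  rw [cfAq, Int.toNat_of_nonneg (by linarith)]

lemma cfAq_pos (k : ℕ) : 1 ≤ cfAq α k := by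
  obtain ⟨_, h0, h1⟩ := gauss_mem hα hα0 hα1 k
  have hgt : (1:ℝ) < (gaussIter α k)⁻¹ := (one_lt_inv_iff₀).2 ⟨h0, h1⟩
  have hfl : 1 ≤ ⌊(gaussIter α k)⁻¹⌋ := by
    rw [Int.le_floor]; exact_mod_cast hgt.le
  rw [cfAq]; omega

lemma gauss_inv_eq (k : ℕ) :
    (gaussIter α k)⁻¹ = (cfAq α k : ℝ) + gaussIter α (k + 1) := by
  have h := cfAq_cast hα hα0 hα1 k
  rw [show gaussIter α (k+1) = Int.fract (gaussIter α k)⁻¹ from rfl,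
    ← Int.self_sub_floor]
  push_cast at h
  rw [h]; ring

lemma floor_alpha : ⌊α⌋ = 0 := Int.floor_eq_zero_iff.2 ⟨hα0.le, hα1⟩

lemma beta_zero : betaCF α 0 = α := by
  rw [betaCF, show cfQ α 0 = 1 from rfl, show cfP α 0 = ⌊α⌋ from rfl,
    floor_alpha hα hα0 hα1]
  push_cast; ring

lemma beta_succ : ∀ k, betaCF α (k + 1) = -(gaussIter α (k + 1)) * betaCF α k := by
  intro k
  induction k with
  | zero =>
    have h1 : (gaussIter α 0)⁻¹ = (cfAq α 0 : ℝ) + gaussIter α 1 := gauss_inv_eq hα hα0 hα1 0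
    have hg0 : gaussIter α 0 = α := by
      rw [show gaussIter α 0 = Int.fract α from rfl, Int.fract_eq_self.2 ⟨hα0.le, hα1⟩]
    rw [hg0] at h1
    have hne : α ≠ 0 := ne_of_gt hα0
    rw [betaCF, betaCF, show cfQ α 1 = cfAq α 0 from rfl, show cfP α 1 = ↑(cfAq α 0) * ⌊α⌋ + 1 from rfl,
      show cfQ α 0 = 1 from rfl, show cfP α 0 = ⌊α⌋ from rfl, floor_alpha hα hα0 hα1]
    push_cast
    have hg1 : gaussIter α 1 = α⁻¹ - (cfAq α 0 : ℝ) := by linarith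
    rw [hg1]
    field_simp
    ring
  | succ n ih =>
    obtain ⟨_, h0, _⟩ := gauss_mem hα hα0 hα1 (n + 1)
    have hne : gaussIter α (n+1) ≠ 0 := ne_of_gt h0
    have h1 : (gaussIter α (n+1))⁻¹ = (cfAq α (n+1) : ℝ) + gaussIter α (n + 2) :=
      gauss_inv_eq hα hα0 hα1 (n+1)
    have hrec : betaCF α (n + 2) = (cfAq α (n+1) : ℝ) * betaCF α (n+1) + betaCF α n := by
      rw [betaCF, betaCF, betaCF, show cfQ α (n+2) = cfAq α (n+1) * cfQ α (n+1) + cfQ α n from rfl,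
        show cfP α (n+2) = ↑(cfAq α (n+1)) * cfP α (n+1) + cfP α n from rfl]
      push_cast; ring
    have hbn : betaCF α n = -(betaCF α (n+1)) / gaussIter α (n+1) := by
      rw [ih]; field_simp
    rw [hrec, hbn]
    have h2 : (cfAq α (n+1) : ℝ) = (gaussIter α (n+1))⁻¹ - gaussIter α (n+2) := by linarith
    rw [h2]
    field_simp
    ring

lemma beta_ne_zero : ∀ k, betaCF α k ≠ 0 := by
  intro k
  induction k with
  | zero => rw [beta_zero hα hα0 hα1]; exact ne_of_gt hα0
  | succ n ih =>
    rw [beta_succ hα hα0 hα1 n]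
    obtain ⟨_, h0, _⟩ := gauss_mem hα hα0 hα1 (n + 1)
    exact mul_ne_zero (by linarith) ih

lemma beta_mul_neg (k : ℕ) : betaCF α k * betaCF α (k + 1) < 0 := by
  rw [beta_succ hα hα0 hα1 k]
  obtain ⟨_, h0, _⟩ := gauss_mem hα hα0 hα1 (k + 1)
  have h := beta_ne_zero hα hα0 hα1 k
  have : 0 < betaCF α k * betaCF α k := mul_self_pos.2 h
  nlinarith

lemma beta_abs_le (k : ℕ) : |betaCF α (k + 1)| ≤ |betaCF α k| := by
  rw [beta_succ hα hα0 hα1 k, abs_mul, abs_neg]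
  obtain ⟨_, h0, h1⟩ := gauss_mem hα hα0 hα1 (k + 1)
  rw [abs_of_pos h0]
  nlinarith [abs_nonneg (betaCF α k)]

end CF

lemma detCF (α : ℝ) : ∀ k, cfP α (k+1) * (cfQ α k : ℤ) - cfP α k * (cfQ α (k+1) : ℤ) = (-1)^k := by
  intro k
  induction k with
  | zero =>
    rw [show cfP α 1 = ↑(cfAq α 0) * ⌊α⌋ + 1 from rfl, show cfQ α 0 = 1 from rfl,
      show cfP α 0 = ⌊α⌋ from rfl, show cfQ α 1 = cfAq α 0 from rfl]
    push_cast; ring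
  | succ n ih =>
    rw [show cfP α (n+2) = ↑(cfAq α (n+1)) * cfP α (n+1) + cfP α n from rfl,
      show cfQ α (n+2) = cfAq α (n+1) * cfQ α (n+1) + cfQ α n from rfl]
    push_cast
    push_cast at ih
    rw [pow_succ]
    nlinarith [ih]

section QF
variable {α : ℝ} (hα : Irrational α) (hα0 : 0 < α) (hα1 : α < 1)
include hα hα0 hα1

lemma cfQ_facts : ∀ k, 1 ≤ cfQ α k ∧ cfQ α k ≤ cfQ α (k+1) ∧ k + 1 ≤ cfQ α (k+1) := by
  intro k
  induction k with
  | zero =>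
    have h := cfAq_pos hα hα0 hα1 0
    refine ⟨le_refl _, ?_, ?_⟩ <;>
      simp only [show cfQ α 0 = 1 from rfl, show cfQ α 1 = cfAq α 0 from rfl] <;> omega
  | succ n ih =>
    obtain ⟨h1, h2, h3⟩ := ih
    have ha := cfAq_pos hα hα0 hα1 (n+1)
    have hq2 : cfQ α (n+2) = cfAq α (n+1) * cfQ α (n+1) + cfQ α n := rfl
    constructor
    · omega
    constructor
    · nlinarith
    · nlinarith

lemma cfQ_pos (k : ℕ) : 1 ≤ cfQ α k := (cfQ_facts hα hα0 hα1 k).1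

lemma cfQ_mono (k : ℕ) : cfQ α k ≤ cfQ α (k+1) := (cfQ_facts hα hα0 hα1 k).2.1

lemma cfQ_ge (k : ℕ) : k ≤ cfQ α k := by
  cases k with
  | zero => omega
  | succ n => exact (cfQ_facts hα hα0 hα1 n).2.2

lemma cfQ_ratio {B : ℕ} (hB : ∀ k, cfAq α k ≤ B) (k : ℕ) :
    cfQ α (k+1) ≤ (B+1) * cfQ α k := by
  cases k with
  | zero =>
    have := hB 0
    simp only [show cfQ α 1 = cfAq α 0 from rfl, show cfQ α 0 = 1 from rfl]
    omega
  | succ n =>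
    have hq2 : cfQ α (n+2) = cfAq α (n+1) * cfQ α (n+1) + cfQ α n := rfl
    have h1 := hB (n+1)
    have h2 := cfQ_mono hα hα0 hα1 n
    nlinarith

lemma beta_lower (k : ℕ) : 1 ≤ ((cfQ α k : ℝ) + cfQ α (k+1)) * |betaCF α k| := by
  have hd := detCF α k
  have hIq : (cfQ α (k+1) : ℝ) * betaCF α k - (cfQ α k : ℝ) * betaCF α (k+1) = (-1)^k := by
    have hdR : (cfP α (k+1) : ℝ) * (cfQ α k : ℝ) - (cfP α k : ℝ) * (cfQ α (k+1) : ℝ) = (-1)^k := by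
      exact_mod_cast hd
    simp only [betaCF]
    linear_combination hdR
  have h1 : (1:ℝ) = |(cfQ α (k+1) : ℝ) * betaCF α k - (cfQ α k : ℝ) * betaCF α (k+1)| := by
    rw [hIq, abs_pow, abs_neg, abs_one, one_pow]
  have h2 : |(cfQ α (k+1) : ℝ) * betaCF α k - (cfQ α k : ℝ) * betaCF α (k+1)| ≤
      (cfQ α (k+1) : ℝ) * |betaCF α k| + (cfQ α k : ℝ) * |betaCF α (k+1)| := by
    refine (abs_sub _ _).trans ?_
    rw [abs_mul, abs_mul, Nat.abs_cast, Nat.abs_cast]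
  have h3 := beta_abs_le hα hα0 hα1 k
  have hq0 : (0:ℝ) ≤ (cfQ α k : ℝ) := Nat.cast_nonneg _
  have hq1 : (0:ℝ) ≤ (cfQ α (k+1) : ℝ) := Nat.cast_nonneg _
  nlinarith

omit hα hα0 hα1 in
lemma abs_le_abs_add_of_sign {a b : ℝ} (h : 0 ≤ a * b) : |a| ≤ |a + b| := by
  rcases le_or_gt 0 a with ha | ha
  · rcases le_or_gt 0 b with hb | hb
    · rw [abs_of_nonneg ha, abs_of_nonneg (by linarith)]; linarith
    · have : a = 0 := by nlinarith
      simp [this]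
  · have hb : b ≤ 0 := by nlinarith
    rw [abs_of_neg ha, abs_of_nonpos (by linarith)]; linarith

lemma bestApprox (k : ℕ) (n p : ℤ) (hn0 : 0 < n) (hn : n < (cfQ α (k+1) : ℤ)) :
    |betaCF α k| ≤ |(n : ℝ) * α - p| := by
  obtain ⟨e, he, hd⟩ : ∃ e : ℤ, e * e = 1 ∧
      cfP α (k+1) * (cfQ α k : ℤ) - cfP α k * (cfQ α (k+1) : ℤ) = e := by
    refine ⟨(-1)^k, ?_, detCF α k⟩
    rw [← pow_add]
    exact Even.neg_one_pow ⟨k, rfl⟩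
  set u : ℤ := e * (n * cfP α (k+1) - p * (cfQ α (k+1) : ℤ)) with hu
  set v : ℤ := e * (p * (cfQ α k : ℤ) - n * cfP α k) with hv
  have hq : u * (cfQ α k : ℤ) + v * (cfQ α (k+1) : ℤ) = n := by
    rw [hu, hv]; linear_combination (e * n) * hd + n * he
  have hp : u * cfP α k + v * cfP α (k+1) = p := by
    rw [hu, hv]; linear_combination (e * p) * hd + p * he
  have hqR : (u : ℝ) * (cfQ α k : ℝ) + (v : ℝ) * (cfQ α (k+1) : ℝ) = (n : ℝ) := by
    exact_mod_cast hq
  have hpR : (u : ℝ) * (cfP α k : ℝ) + (v : ℝ) * (cfP α (k+1) : ℝ) = (p : ℝ) := by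
    exact_mod_cast hp
  have hid : (n : ℝ) * α - p = (u : ℝ) * betaCF α k + (v : ℝ) * betaCF α (k+1) := by
    simp only [betaCF]
    linear_combination α * hqR.symm - hpR.symm
  have hqk1 : 1 ≤ cfQ α k := cfQ_pos hα hα0 hα1 k
  rcases eq_or_ne v 0 with hv0 | hv0
  · have hu0 : u ≠ 0 := by
      intro h0; rw [h0, hv0] at hq; simp at hq; omega
    have hu1 : (1:ℝ) ≤ |(u:ℝ)| := by
      rw [← Int.cast_abs]; exact_mod_cast Int.one_le_abs hu0
    rw [hid, hv0]
    push_cast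
    rw [zero_mul, add_zero, abs_mul]
    nlinarith [abs_nonneg (betaCF α k)]
  · have hu0 : u ≠ 0 := by
      intro h0
      rw [h0] at hq; simp at hq
      have : 1 ≤ |v| := Int.one_le_abs hv0
      have h2 : |n| = |v| * (cfQ α (k+1) : ℤ) := by rw [← hq, abs_mul, abs_of_nonneg (Int.natCast_nonneg (cfQ α (k+1)))]
      have : (cfQ α (k+1) : ℤ) ≤ |n| := by nlinarith [Int.ofNat_le.2 (cfQ_pos hα hα0 hα1 (k+1))]
      rw [abs_of_pos hn0] at this; omega
    -- u and v have opposite signs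
    have hopp : u * v < 0 := by
      rcases lt_trichotomy u 0 with hul | hue | hug
      · rcases lt_trichotomy v 0 with hvl | hve | hvg
        · exfalso
          have : u * (cfQ α k : ℤ) + v * (cfQ α (k+1) : ℤ) ≤ -1 * 1 + -1 * 1 := by
            have hq1 : (1:ℤ) ≤ (cfQ α k : ℤ) := by exact_mod_cast cfQ_pos hα hα0 hα1 k
            have hq2 : (1:ℤ) ≤ (cfQ α (k+1) : ℤ) := by exact_mod_cast cfQ_pos hα hα0 hα1 (k+1)
            have h3 : u ≤ -1 := by omega
            have h4 : v ≤ -1 := by omega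
            nlinarith
          omega
        · exact absurd hve hv0
        · exact mul_neg_of_neg_of_pos hul hvg
      · exact absurd hue hu0
      · rcases lt_trichotomy v 0 with hvl | hve | hvg
        · exact mul_neg_of_pos_of_neg hug hvl
        · exact absurd hve hv0
        · exfalso
          have hq1 : (1:ℤ) ≤ (cfQ α k : ℤ) := by exact_mod_cast cfQ_pos hα hα0 hα1 k
          have h3 : 1 ≤ u := by omega
          have h4 : 1 ≤ v := by omega
          nlinarith
    have hbb := beta_mul_neg hα hα0 hα1 k
    have hsame : 0 ≤ ((u:ℝ) * betaCF α k) * ((v:ℝ) * betaCF α (k+1)) := by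
      have : ((u:ℝ) * betaCF α k) * ((v:ℝ) * betaCF α (k+1)) =
          ((u * v : ℤ) : ℝ) * (betaCF α k * betaCF α (k+1)) := by push_cast; ring
      rw [this]
      have h5 : ((u * v : ℤ) : ℝ) < 0 := by exact_mod_cast hopp
      nlinarith
    have hu1 : (1:ℝ) ≤ |(u:ℝ)| := by
      rw [← Int.cast_abs]; exact_mod_cast Int.one_le_abs hu0
    calc |betaCF α k| ≤ |(u:ℝ)| * |betaCF α k| := by nlinarith [abs_nonneg (betaCF α k)]
      _ = |(u:ℝ) * betaCF α k| := (abs_mul _ _).symm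
      _ ≤ |(u:ℝ) * betaCF α k + (v:ℝ) * betaCF α (k+1)| := abs_le_abs_add_of_sign hsame
      _ = |(n : ℝ) * α - p| := by rw [hid]

lemma lowbd_nat {B : ℕ} (hB : ∀ k, cfAq α k ≤ B) (n : ℕ) (hn : 1 ≤ n) :
    1 / (((B:ℝ)+2) * n) ≤ nearInt (n * α) := by
  classical
  set k := Nat.findGreatest (fun k => cfQ α k ≤ n) n with hk
  have hP0 : cfQ α 0 ≤ n := hn
  have hk1 : cfQ α k ≤ n := Nat.findGreatest_spec (P := fun k => cfQ α k ≤ n) (Nat.zero_le n) hP0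
  have hk2 : n < cfQ α (k+1) := by
    by_contra hc
    push_neg at hc
    have hkn : k + 1 ≤ n := le_trans (cfQ_ge hα hα0 hα1 (k+1)) hc
    exact Nat.findGreatest_is_greatest (Nat.lt_succ_self k) hkn hc
  have hba := bestApprox hα hα0 hα1 k (n : ℤ) (round ((n:ℝ) * α))
    (by exact_mod_cast hn) (by exact_mod_cast hk2)
  push_cast at hba
  have hni : nearInt ((n:ℝ) * α) = |(n:ℝ) * α - round ((n:ℝ)*α)| := rfl
  have hbl := beta_lower hα hα0 hα1 k
  have hratio := cfQ_ratio hα hα0 hα1 hB k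
  have hqn : (cfQ α k : ℝ) ≤ n := by exact_mod_cast hk1
  have hq1 : (1:ℝ) ≤ (cfQ α k : ℝ) := by exact_mod_cast cfQ_pos hα hα0 hα1 k
  have hsum : (cfQ α k : ℝ) + cfQ α (k+1) ≤ ((B:ℝ)+2) * n := by
    have hr : (cfQ α (k+1) : ℝ) ≤ ((B:ℝ)+1) * cfQ α k := by exact_mod_cast hratio
    nlinarith
  have hpos : (0:ℝ) < ((B:ℝ)+2) * n := by positivity
  rw [div_le_iff₀ hpos]
  have habs : (0:ℝ) ≤ |betaCF α k| := abs_nonneg _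
  have h2 : 1 ≤ (((B:ℝ)+2) * n) * |betaCF α k| := by
    nlinarith [mul_nonneg (sub_nonneg.2 hsum) habs]
  calc (1:ℝ) ≤ (((B:ℝ)+2) * n) * |betaCF α k| := h2
    _ ≤ nearInt ((n:ℝ)*α) * (((B:ℝ)+2) * n) := by
        rw [hni]; nlinarith [mul_le_mul_of_nonneg_right hba hpos.le]
    _ = nearInt (↑n * α) * ((↑B + 2) * ↑n) := rfl

lemma lowbd {B : ℕ} (hB : ∀ k, cfAq α k ≤ B) (m : ℤ) (hm : m ≠ 0) :
    1 / (((B:ℝ)+2) * |(m:ℝ)|) ≤ nearInt ((m:ℝ) * α) := by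
  have key : ∀ m' : ℤ, 0 < m' → 1 / (((B:ℝ)+2) * |(m':ℝ)|) ≤ nearInt ((m':ℝ) * α) := by
    intro m' hm'
    obtain ⟨n, rfl⟩ : ∃ n : ℕ, m' = (n : ℤ) := ⟨m'.toNat, (Int.toNat_of_nonneg hm'.le).symm⟩
    have hn : 1 ≤ n := by exact_mod_cast hm'
    have := lowbd_nat hα hα0 hα1 hB n hn
    simpa [abs_of_nonneg (show (0:ℝ) ≤ (n:ℝ) from Nat.cast_nonneg n)] using this
  rcases lt_trichotomy m 0 with h | h | h
  · have := key (-m) (by omega)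
    have he : ((-m : ℤ) : ℝ) = -(m:ℝ) := by push_cast; ring
    rw [he, abs_neg] at this
    rw [show -(m:ℝ) * α = -((m:ℝ) * α) by ring, nearInt_neg] at this
    exact this
  · exact absurd h hm
  · exact key m h

end QF

/-- `ε(q) = q · min{ ‖-t - jα‖ : |j| < q }`. -/
noncomputable def epsQ (α t : ℝ) (q : ℕ) : ℝ :=
  q * sInf {r : ℝ | ∃ j : ℤ, |j| < (q : ℤ) ∧ r = nearInt (-t - (j : ℝ) * α)}

/-- `θ(q) = q · min{ ‖1/2 - t - jα‖ : |j| < q }`. -/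
noncomputable def thetaQ (α t : ℝ) (q : ℕ) : ℝ :=
  q * sInf {r : ℝ | ∃ j : ℤ, |j| < (q : ℤ) ∧ r = nearInt (1/2 - t - (j : ℝ) * α)}

/-- `α` is badly approximable: its continued fraction partial quotients are bounded. -/
def BadlyApprox (α : ℝ) : Prop := ∃ B : ℕ, ∀ k, cfAq α k ≤ B

lemma helper_same {α : ℝ} {C Q : ℝ} {d : ℤ} (hC : 3 ≤ C) (hQ : 1 ≤ Q)
    (hlow : ∀ m : ℤ, m ≠ 0 → 1 / (C * |(m:ℝ)|) ≤ nearInt ((m:ℝ) * α))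
    (hd : |(d:ℝ)| ≤ 2 * Q)
    (hlt : nearInt ((d:ℝ) * α) < 1 / (17 * C * Q)) : d = 0 := by
  by_contra h0
  have h1 := hlow d h0
  have habs1 : (1:ℝ) ≤ |(d:ℝ)| := by
    rw [← Int.cast_abs]; exact_mod_cast Int.one_le_abs h0
  have hp1 : (0:ℝ) < C * |(d:ℝ)| := by nlinarith
  have hp2 : (0:ℝ) < C * (2*Q) := by nlinarith
  have h3 : 1 / (C * (2*Q)) < 1 / (17 * C * Q) := by
    calc 1 / (C * (2*Q)) ≤ 1/(C*|(d:ℝ)|) :=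
          one_div_le_one_div_of_le hp1 (by nlinarith)
      _ ≤ nearInt ((d:ℝ)*α) := h1
      _ < 1/(17*C*Q) := hlt
  rw [div_lt_div_iff₀ hp2 (by nlinarith)] at h3
  nlinarith

lemma helper_diff {α : ℝ} {C Q w : ℝ} {d : ℤ} (hC : 3 ≤ C) (hQ : 1 ≤ Q)
    (hw : w = 1/2 ∨ w = -(1/2))
    (hlow : ∀ m : ℤ, m ≠ 0 → 1 / (C * |(m:ℝ)|) ≤ nearInt ((m:ℝ) * α))
    (hd : |(d:ℝ)| ≤ 2 * Q)
    (hlt : nearInt (w + (d:ℝ) * α) < 1 / (17 * C * Q)) : False := by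
  have hCQ : (0:ℝ) < 17 * C * Q := by nlinarith
  rcases eq_or_ne d 0 with rfl | h0
  · have hnw : nearInt w = 1/2 := by
      rcases hw with rfl | rfl
      · exact nearInt_half
      · rw [show (-(1/2:ℝ)) = -(1/2) from rfl, nearInt_neg]; exact nearInt_half
    have e : w + ((0:ℤ):ℝ)*α = w := by push_cast; ring
    rw [e, hnw] at hlt
    rw [div_lt_div_iff₀ (by norm_num) hCQ] at hlt
    nlinarith
  · have hdouble : nearInt (2*((d:ℝ)*α)) ≤ 2 * nearInt (w + (d:ℝ)*α) := by
      have h2 := nearInt_two_mul (w + (d:ℝ)*α)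
      rcases hw with rfl | rfl
      · have e : 2*((1/2:ℝ) + (d:ℝ)*α) = 2*((d:ℝ)*α) + ((1:ℤ):ℝ) := by push_cast; ring
        rw [e, nearInt_add_int] at h2; exact h2
      · have e : 2*(-(1/2:ℝ) + (d:ℝ)*α) = 2*((d:ℝ)*α) + ((-1:ℤ):ℝ) := by push_cast; ring
        rw [e, nearInt_add_int] at h2; exact h2
    have h1 := hlow (2*d) (by omega)
    have e2 : ((2*d : ℤ):ℝ) * α = 2*((d:ℝ)*α) := by push_cast; ring
    rw [e2] at h1
    have habs1 : (1:ℝ) ≤ |(d:ℝ)| := by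
      rw [← Int.cast_abs]; exact_mod_cast Int.one_le_abs h0
    have habs2 : |((2*d : ℤ):ℝ)| = 2*|(d:ℝ)| := by
      push_cast; rw [abs_mul]; norm_num
    have hp1 : (0:ℝ) < C * |((2*d:ℤ):ℝ)| := by rw [habs2]; nlinarith
    have h3 : 1/(C*(4*Q)) < 2/(17*C*Q) := by
      calc 1/(C*(4*Q)) ≤ 1/(C*|((2*d:ℤ):ℝ)|) := by
            refine one_div_le_one_div_of_le hp1 ?_
            rw [habs2]; nlinarith
        _ ≤ nearInt (2*((d:ℝ)*α)) := h1
        _ ≤ 2 * nearInt (w + (d:ℝ)*α) := hdouble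
        _ < 2 * (1/(17*C*Q)) := by nlinarith
        _ = 2/(17*C*Q) := by ring
    rw [div_lt_div_iff₀ (by nlinarith) hCQ] at h3
    nlinarith


/-- If `α` is badly approximable and `min{ε(q), θ(q)} → 0` along the convergent
denominators of `α`, then `t ∈ ℤα (mod 1)` or `t ∈ ℤα + 1/2 (mod 1)`. -/
theorem stmt16 (α : ℝ) (hα : Irrational α) (hα0 : 0 < α) (hα1 : α < 1)
    (hbad : BadlyApprox α) (t : ℝ) (ht : t ∈ Set.Ico (0:ℝ) 1)
    (hlim : Filter.Tendsto (fun k : ℕ => min (epsQ α t (cfQ α k)) (thetaQ α t (cfQ α k)))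
      Filter.atTop (nhds 0)) :
    (∃ n m : ℤ, t = (n : ℝ) * α + m) ∨ (∃ n m : ℤ, t = (n : ℝ) * α + 1/2 + m) := by

  obtain ⟨B, hB⟩ := hbad
  set C : ℝ := (B:ℝ) + 2 with hCdef
  have hB1 : 1 ≤ B := le_trans (cfAq_pos hα hα0 hα1 0) (hB 0)
  have hC3 : (3:ℝ) ≤ C := by
    have : (1:ℝ) ≤ (B:ℝ) := by exact_mod_cast hB1
    rw [hCdef]; linarith
  set δ : ℝ := 1 / (17 * C^2) with hδdef
  have hδpos : 0 < δ := by rw [hδdef]; positivity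
  have hlow : ∀ m : ℤ, m ≠ 0 → 1 / (C * |(m:ℝ)|) ≤ nearInt ((m:ℝ) * α) := by
    intro m hm
    have := lowbd hα hα0 hα1 hB m hm
    rw [hCdef]; exact this
  have hev : ∀ᶠ k in Filter.atTop, min (epsQ α t (cfQ α k)) (thetaQ α t (cfQ α k)) < δ :=
    hlim.eventually (gt_mem_nhds hδpos)
  obtain ⟨K, hK⟩ := Filter.eventually_atTop.1 hev
  have hch : ∀ k : ℕ, ∃ (s : ℝ) (j : ℤ), (s = 0 ∨ s = 1/2) ∧
      (K ≤ k → |j| < (cfQ α k : ℤ) ∧ nearInt (t - s + (j:ℝ) * α) < δ / cfQ α k) := by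
    intro k
    by_cases hk : K ≤ k
    · have hq1 : 1 ≤ cfQ α k := cfQ_pos hα hα0 hα1 k
      have hqR : (0:ℝ) < (cfQ α k : ℝ) := by exact_mod_cast hq1
      have hmin := hK k hk
      rcases min_lt_iff.1 hmin with h | h
      · rw [epsQ] at h
        have hne : {r : ℝ | ∃ j : ℤ, |j| < (cfQ α k : ℤ) ∧
            r = nearInt (-t - (j : ℝ) * α)}.Nonempty :=
          ⟨nearInt (-t - ((0:ℤ) : ℝ) * α), 0,
            by simpa using (show (0:ℤ) < (cfQ α k : ℤ) by exact_mod_cast hq1), rfl⟩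
        have hlt : sInf {r : ℝ | ∃ j : ℤ, |j| < (cfQ α k : ℤ) ∧
            r = nearInt (-t - (j : ℝ) * α)} < δ / cfQ α k := by
          rw [lt_div_iff₀ hqR, mul_comm]; exact h
        obtain ⟨r, ⟨j, hj, hr⟩, hrlt⟩ := exists_lt_of_csInf_lt hne hlt
        refine ⟨0, j, Or.inl rfl, fun _ => ⟨hj, ?_⟩⟩
        have e : nearInt (t - 0 + (j:ℝ)*α) = nearInt (-t - (j:ℝ)*α) := by
          rw [show (-t - (j:ℝ)*α) = -(t - 0 + (j:ℝ)*α) by ring, nearInt_neg]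
        rw [e, ← hr]; exact hrlt
      · rw [thetaQ] at h
        have hne : {r : ℝ | ∃ j : ℤ, |j| < (cfQ α k : ℤ) ∧
            r = nearInt (1/2 - t - (j : ℝ) * α)}.Nonempty :=
          ⟨nearInt (1/2 - t - ((0:ℤ) : ℝ) * α), 0,
            by simpa using (show (0:ℤ) < (cfQ α k : ℤ) by exact_mod_cast hq1), rfl⟩
        have hlt : sInf {r : ℝ | ∃ j : ℤ, |j| < (cfQ α k : ℤ) ∧
            r = nearInt (1/2 - t - (j : ℝ) * α)} < δ / cfQ α k := by
          rw [lt_div_iff₀ hqR, mul_comm]; exact h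
        obtain ⟨r, ⟨j, hj, hr⟩, hrlt⟩ := exists_lt_of_csInf_lt hne hlt
        refine ⟨1/2, j, Or.inr rfl, fun _ => ⟨hj, ?_⟩⟩
        have e : nearInt (t - 1/2 + (j:ℝ)*α) = nearInt (1/2 - t - (j:ℝ)*α) := by
          rw [show ((1:ℝ)/2 - t - (j:ℝ)*α) = -(t - 1/2 + (j:ℝ)*α) by ring, nearInt_neg]
        rw [e, ← hr]; exact hrlt
    · exact ⟨0, 0, Or.inl rfl, fun h => absurd h hk⟩
  choose s j hs hrest using hch
  -- consecutive steps agree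
  have hstep : ∀ k, K ≤ k → s k = s (k+1) ∧ j k = j (k+1) := by
    intro k hk
    obtain ⟨hj1, hn1⟩ := hrest k hk
    obtain ⟨hj2, hn2⟩ := hrest (k+1) (le_trans hk (Nat.le_succ k))
    have hq1 : 1 ≤ cfQ α k := cfQ_pos hα hα0 hα1 k
    have hq1' : 1 ≤ cfQ α (k+1) := cfQ_pos hα hα0 hα1 (k+1)
    have hqR : (0:ℝ) < (cfQ α k : ℝ) := by exact_mod_cast hq1
    have hqR' : (0:ℝ) < (cfQ α (k+1) : ℝ) := by exact_mod_cast hq1'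
    have hqR1' : (1:ℝ) ≤ (cfQ α (k+1) : ℝ) := by exact_mod_cast hq1'
    have hmono : cfQ α k ≤ cfQ α (k+1) := cfQ_mono hα hα0 hα1 k
    have hratio : (cfQ α (k+1) : ℝ) ≤ ((B:ℝ)+1) * cfQ α k := by
      exact_mod_cast cfQ_ratio hα hα0 hα1 hB k
    set d : ℤ := j k - j (k+1) with hd
    have hsum : nearInt ((s (k+1) - s k) + (d:ℝ) * α) < 1 / (17 * C * (cfQ α (k+1) : ℝ)) := by
      have e : (s (k+1) - s k) + (d:ℝ) * α =
          (t - s k + (j k : ℝ) * α) + -(t - s (k+1) + (j (k+1) : ℝ) * α) := by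
        rw [hd]; push_cast; ring
      have h1 : nearInt ((s (k+1) - s k) + (d:ℝ) * α) ≤
          nearInt (t - s k + (j k : ℝ) * α) + nearInt (t - s (k+1) + (j (k+1) : ℝ) * α) := by
        rw [e]
        refine (nearInt_add_le _ _).trans ?_
        rw [nearInt_neg]
      have h2 : δ / (cfQ α k : ℝ) ≤ δ * ((B:ℝ)+1) / cfQ α (k+1) := by
        rw [div_le_div_iff₀ hqR hqR']
        nlinarith
      have h3 : δ * ((B:ℝ)+1) / cfQ α (k+1) + δ / cfQ α (k+1) = δ * C / cfQ α (k+1) := by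
        rw [← add_div, hCdef]; ring
      have h4 : δ * C / (cfQ α (k+1) : ℝ) = 1 / (17 * C * cfQ α (k+1)) := by
        rw [hδdef]
        have hC0 : C ≠ 0 := by linarith
        field_simp
      calc nearInt ((s (k+1) - s k) + (d:ℝ) * α) ≤ _ := h1
        _ < δ / (cfQ α k : ℝ) + δ / cfQ α (k+1) := by linarith
        _ ≤ δ * ((B:ℝ)+1) / cfQ α (k+1) + δ / cfQ α (k+1) := by linarith
        _ = δ * C / cfQ α (k+1) := h3
        _ = 1 / (17 * C * cfQ α (k+1)) := h4
    have hdabs : |(d:ℝ)| ≤ 2 * (cfQ α (k+1) : ℝ) := by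
      have hZ : |d| ≤ 2 * (cfQ α (k+1) : ℤ) := by
        have h5 := abs_sub (j k) (j (k+1))
        rw [← hd] at h5
        have h6 : (cfQ α k : ℤ) ≤ (cfQ α (k+1) : ℤ) := by exact_mod_cast hmono
        omega
      calc |(d:ℝ)| = ((|d| : ℤ) : ℝ) := by rw [Int.cast_abs]
        _ ≤ ((2 * (cfQ α (k+1) : ℤ) : ℤ) : ℝ) := by exact_mod_cast hZ
        _ = 2 * (cfQ α (k+1) : ℝ) := by push_cast; ring
    rcases hs k with hsk | hsk <;> rcases hs (k+1) with hsk' | hsk'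
    · have e : s (k+1) - s k = 0 := by rw [hsk, hsk']; ring
      rw [e, zero_add] at hsum
      have hd0 : d = 0 := helper_same hC3 hqR1' hlow hdabs hsum
      exact ⟨hsk.trans hsk'.symm, by omega⟩
    · exfalso
      have e : s (k+1) - s k = 1/2 := by rw [hsk, hsk']; ring
      rw [e] at hsum
      exact helper_diff hC3 hqR1' (Or.inl rfl) hlow hdabs hsum
    · exfalso
      have e : s (k+1) - s k = -(1/2) := by rw [hsk, hsk']; ring
      rw [e] at hsum
      exact helper_diff hC3 hqR1' (Or.inr rfl) hlow hdabs hsum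
    · have e : s (k+1) - s k = 0 := by rw [hsk, hsk']; ring
      rw [e, zero_add] at hsum
      have hd0 : d = 0 := helper_same hC3 hqR1' hlow hdabs hsum
      exact ⟨hsk.trans hsk'.symm, by omega⟩
  have hconst : ∀ k, K ≤ k → s k = s K ∧ j k = j K := by
    intro k hk
    induction k, hk using Nat.le_induction with
    | base => exact ⟨rfl, rfl⟩
    | succ n hn ih =>
      obtain ⟨h1, h2⟩ := hstep n hn
      exact ⟨h1.symm.trans ih.1, h2.symm.trans ih.2⟩
  have hr0 : nearInt (t - s K + (j K : ℝ) * α) = 0 := by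
    by_contra hr
    have hrpos : 0 < nearInt (t - s K + (j K : ℝ) * α) :=
      lt_of_le_of_ne (nearInt_nonneg _) (Ne.symm hr)
    obtain ⟨M, hM⟩ := exists_nat_gt (δ / nearInt (t - s K + (j K : ℝ) * α))
    set k := max K M with hkdef
    have hkK : K ≤ k := le_max_left _ _
    obtain ⟨heqs, heqj⟩ := hconst k hkK
    have hbound := (hrest k hkK).2
    rw [heqs, heqj] at hbound
    have hqM : (M : ℝ) ≤ (cfQ α k : ℝ) := by
      have h5 : M ≤ k := le_max_right _ _
      have h6 := cfQ_ge hα hα0 hα1 k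
      exact_mod_cast le_trans h5 h6
    have hqpos : (0:ℝ) < (cfQ α k : ℝ) := by
      exact_mod_cast cfQ_pos hα hα0 hα1 k
    have hfin : δ / (cfQ α k : ℝ) < nearInt (t - s K + (j K : ℝ) * α) := by
      rw [div_lt_iff₀ hqpos]
      have h7 : δ / nearInt (t - s K + (j K : ℝ) * α) < (cfQ α k : ℝ) :=
        lt_of_lt_of_le hM hqM
      rw [div_lt_iff₀ hrpos] at h7
      nlinarith
    linarith
  obtain ⟨m, hm⟩ := nearInt_eq_zero hr0
  rcases hs K with h | h
  · left
    refine ⟨-(j K), m, ?_⟩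
    rw [h] at hm
    push_cast
    linarith
  · right
    refine ⟨-(j K), m, ?_⟩
    rw [h] at hm
    push_cast
    linarith
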